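/- arXiv:2407.11331 — 2 statements merged into one kernel-verified Lean document; each statement's English description precedes it below -/
import Mathlib

section
/- Let n ≥ 3, let K be a convex body in ℝ^n, and let H be an affine hyperplane of ℝ^n such that (i) the projection of K onto H along a normal direction of H equals K ∩ H, and (ii) K has no extreme points lying in H. Let D be a finite set of nonzero vectors parallel to H such that every point of the relative boundary of K ∩ H is illuminated within H by some d ∈ D (i.e., for each such p there exist d ∈ D and ε > 0 with p + εd in the relative interior of K ∩ H). Then there exists a set D′ of nonzero directions in ℝ^n with |D′| ≤ 2|D| that illuminates K. In particular, 𝕀(K) ≤ 2·𝕀(K ∩ H), where 𝕀(K ∩ H) is the illumination number of K ∩ H regarded as an (n−1)-dimensional convex body in H. -/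
open Set

/-- A convex body in `ℝ^n`: a compact convex set with nonempty interior. -/
def IsConvexBody {n : ℕ} (K : Set (Fin n → ℝ)) : Prop :=
  Convex ℝ K ∧ IsCompact K ∧ (interior K).Nonempty

/-- `K` is 1-unconditional: closed under sign changes of the coordinates. -/
def Unconditional {n : ℕ} (K : Set (Fin n → ℝ)) : Prop :=
  ∀ x ∈ K, ∀ ε : Fin n → ℝ, (∀ i, ε i = 1 ∨ ε i = -1) → (fun i => ε i * x i) ∈ K

/-- The direction `d` illuminates the (boundary) point `x` of `K`. -/
def Illuminates {n : ℕ} (K : Set (Fin n → ℝ)) (d x : Fin n → ℝ) : Prop :=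
  ∃ ε : ℝ, 0 < ε ∧ x + ε • d ∈ interior K

/-- The set of directions `D` illuminates every boundary point of `K`. -/
def IlluminatesSet {n : ℕ} (K : Set (Fin n → ℝ)) (D : Set (Fin n → ℝ)) : Prop :=
  ∀ x ∈ frontier K, ∃ d ∈ D, Illuminates K d x

/-- The illumination number: smallest cardinality of a set of nonzero directions
illuminating `K`. -/
noncomputable def illumNumber {n : ℕ} (K : Set (Fin n → ℝ)) : ℕ :=
  sInf {m | ∃ D : Finset (Fin n → ℝ), D.card = m ∧ (∀ d ∈ D, d ≠ 0) ∧
    IlluminatesSet K ↑D}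

/-- A parallelepiped: an affine image of the cube `[-1,1]^n`. -/
def IsParallelepiped {n : ℕ} (K : Set (Fin n → ℝ)) : Prop :=
  ∃ T : (Fin n → ℝ) ≃ᵃ[ℝ] (Fin n → ℝ),
    K = T '' (Set.Icc (fun _ => (-1 : ℝ)) (fun _ => 1))

/-- The standard basis vector `e i`. -/
def stdB {n : ℕ} (i : Fin n) : Fin n → ℝ := Pi.single i 1

/-- The class `𝒰^n`: 1-unconditional convex bodies all of whose standard basis
vectors lie on the boundary. -/
def memU {n : ℕ} (K : Set (Fin n → ℝ)) : Prop :=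
  IsConvexBody K ∧ Unconditional K ∧ ∀ i : Fin n, stdB i ∈ frontier K

/-- A 1-unconditional body is cubelike if all its extreme points have all
coordinates nonzero. -/
def Cubelike {n : ℕ} (K : Set (Fin n → ℝ)) : Prop :=
  ∀ x ∈ Set.extremePoints ℝ K, ∀ i, x i ≠ 0

/-- The all-ones vector `𝟙`. -/
def allOnes {n : ℕ} : Fin n → ℝ := fun _ => 1

/-- The relative illumination number of a (lower-dimensional) convex set `A`:
smallest cardinality of a set of nonzero directions pushing each point of the
relative (intrinsic) boundary of `A` into the relative (intrinsic) interior. -/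
noncomputable def relIllumNumber {n : ℕ} (A : Set (Fin n → ℝ)) : ℕ :=
  sInf {m | ∃ D : Finset (Fin n → ℝ), D.card = m ∧ (∀ d ∈ D, d ≠ 0) ∧
    ∀ p ∈ intrinsicFrontier ℝ A, ∃ d ∈ D, ∃ ε : ℝ, 0 < ε ∧
      p + ε • d ∈ intrinsicInterior ℝ A}

open Pointwise


section Minkowski

variable {E : Type*} [NormedAddCommGroup E] [NormedSpace ℝ E] [FiniteDimensional ℝ E]

theorem my_minkowski {C : Set E} (hCcomp : IsCompact C) (hCconv : Convex ℝ C) :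
    C ⊆ convexHull ℝ (C.extremePoints ℝ) := by
  suffices h : ∀ m : ℕ, ∀ C : Set E, IsCompact C → Convex ℝ C →
      Module.finrank ℝ (vectorSpan ℝ C) ≤ m → C ⊆ convexHull ℝ (C.extremePoints ℝ) by
    exact h _ C hCcomp hCconv le_rfl
  intro m
  induction m with
  | zero =>
    intro C hcomp hconv hrank p hp
    have hbot : vectorSpan ℝ C = ⊥ := by
      rw [← Submodule.finrank_eq_zero (R := ℝ)]
      omega
    have hsing : ∀ a ∈ C, a = p := by
      intro a ha
      have := vsub_mem_vectorSpan ℝ ha hp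
      rw [hbot, Submodule.mem_bot] at this
      rw [vsub_eq_sub, sub_eq_zero] at this
      exact this
    refine subset_convexHull ℝ _ ?_
    rw [mem_extremePoints]
    exact ⟨hp, fun x₁ h₁ x₂ h₂ _ => ⟨hsing x₁ h₁, hsing x₂ h₂⟩⟩
  | succ m ih =>
    intro C hcomp hconv hrank p hp
    by_cases hpext : p ∈ C.extremePoints ℝ
    · exact subset_convexHull ℝ _ hpext
    -- auxiliary claim: a point of `C` extremal in some direction of the
    -- vector span lies in the convex hull of the extreme points
    have haux : ∀ y ∈ C, ∀ u : E, u ∈ vectorSpan ℝ C →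
        (∀ ε : ℝ, 0 < ε → y + ε • u ∉ C) → y ∈ convexHull ℝ (C.extremePoints ℝ) := by
      intro y hy u hu hray
      obtain ⟨W', hW'⟩ := Submodule.exists_isCompl (vectorSpan ℝ C)
      set W := vectorSpan ℝ C with hWdef
      set Chat := C + (W' : Set E) with hChatdef
      have hCsub : C ⊆ Chat := by
        intro x hx
        have := Set.add_mem_add hx (W'.zero_mem)
        simpa using this
      have hChatconv : Convex ℝ Chat := hconv.add (W'.convex)
      have hmemChat : ∀ x ∈ C, ∀ w ∈ W', x + w ∈ Chat := fun x hx w hw => Set.add_mem_add hx hw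
      have hyChat : y ∈ Chat := hCsub hy
      have hrayChat : ∀ ε : ℝ, 0 < ε → y + ε • u ∉ Chat := by
        rintro ε hε hmem
        obtain ⟨b, hb, w, hw, hbw⟩ := Set.mem_add.mp hmem
        have hwW : w ∈ W := by
          have h1 : w = (y - b) + ε • u := by
            have := hbw
            linear_combination (norm := module) this
          rw [h1]
          exact W.add_mem (by simpa [vsub_eq_sub] using vsub_mem_vectorSpan ℝ hy hb)
            (W.smul_mem ε hu)
        have : w = 0 := by
          have := hW'.inf_eq_bot
          have hww : w ∈ W ⊓ W' := ⟨hwW, hw⟩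
          rw [this, Submodule.mem_bot] at hww
          exact hww
        rw [this, add_zero] at hbw
        exact hray ε hε (hbw ▸ hb)
      have hynotint : y ∉ interior Chat := by
        intro hyint
        obtain ⟨r, hr, hball⟩ := Metric.isOpen_iff.mp isOpen_interior y hyint
        have hε : (0:ℝ) < r / (2 * (‖u‖ + 1)) := by positivity
        refine hrayChat _ hε (interior_subset (hball ?_))
        rw [Metric.mem_ball, dist_eq_norm]
        have h1 : ‖y + (r / (2 * (‖u‖ + 1))) • u - y‖ = (r / (2 * (‖u‖ + 1))) * ‖u‖ := by
          rw [add_sub_cancel_left, norm_smul, Real.norm_eq_abs, abs_of_pos hε]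
        rw [h1]
        have hun : (0:ℝ) ≤ ‖u‖ := norm_nonneg u
        rw [div_mul_eq_mul_div, div_lt_iff₀ (by positivity)]
        nlinarith
      obtain ⟨l, hl⟩ := geometric_hahn_banach_open_point hChatconv.interior isOpen_interior hynotint
      have hspan : affineSpan ℝ Chat = ⊤ := by
        rw [AffineSubspace.affineSpan_eq_top_iff_vectorSpan_eq_top_of_nonempty ℝ E E ⟨y, hyChat⟩]
        rw [eq_top_iff, ← hW'.sup_eq_top]
        refine sup_le ?_ ?_
        · exact (vectorSpan_mono ℝ hCsub : W ≤ _)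
        · intro w hw
          have h1 : (y + w) -ᵥ y ∈ vectorSpan ℝ Chat :=
            vsub_mem_vectorSpan ℝ (hmemChat y hy w hw) hyChat
          simpa [vsub_eq_sub] using h1
      have hintne : (interior Chat).Nonempty := by
        rw [hChatconv.interior_nonempty_iff_affineSpan_eq_top]
        exact hspan
      obtain ⟨z₀, hz₀⟩ := hintne
      have hle : ∀ z ∈ Chat, l z ≤ l y := by
        intro z hz
        by_contra hzy
        push_neg at hzy
        have key : ∀ t : ℝ, 0 < t → t ≤ 1 → t * l z₀ + (1 - t) * l z < l y := by
          intro t ht ht1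
          have h' := hl _ (hChatconv.combo_interior_self_mem_interior (a := t) (b := 1 - t) hz₀ hz ht
            (by linarith) (by ring))
          rw [map_add, map_smul, map_smul, smul_eq_mul, smul_eq_mul] at h'
          exact h'
        set A := l z - l y with hA
        have hApos : 0 < A := by simp [hA]; linarith
        set B := l z - l z₀ with hB
        set t := min 1 (A / (2 * (|B| + 1))) with ht
        have ht0 : 0 < t := by
          apply lt_min one_pos
          positivity
        have ht1 : t ≤ 1 := min_le_left _ _
        have htB : t * B ≤ A / 2 := by
          calc t * B ≤ t * |B| := by
                have := le_abs_self B
                nlinarith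
            _ ≤ (A / (2 * (|B| + 1))) * |B| := by
                have h2 : t ≤ A / (2 * (|B| + 1)) := min_le_right _ _
                have : (0:ℝ) ≤ |B| := abs_nonneg B
                nlinarith
            _ ≤ A / 2 := by
                rw [div_mul_eq_mul_div, div_le_div_iff₀ (by positivity) (by norm_num)]
                have : (0:ℝ) ≤ |B| := abs_nonneg B
                nlinarith
        have := key t ht0 ht1
        have hgt : t * l z₀ + (1 - t) * l z = l z - t * B := by ring
        rw [hgt] at this
        linarith
      have hW'0 : ∀ w ∈ W', l w = 0 := by
        intro w hw
        have h1 : l (y + (1:ℝ) • w) ≤ l y := hle _ (hmemChat y hy _ (W'.smul_mem 1 hw))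
        have h2 : l (y + (-1:ℝ) • w) ≤ l y := hle _ (hmemChat y hy _ (W'.smul_mem (-1) hw))
        simp [map_add, map_smul] at h1 h2
        linarith
      have hlnz : ∃ w₀ ∈ W, l w₀ ≠ 0 := by
        have hz₀y : l z₀ < l y := hl _ hz₀
        have hmem : z₀ - y ∈ W ⊔ W' := by rw [hW'.sup_eq_top]; trivial
        obtain ⟨w, hw, w', hw', hww'⟩ := Submodule.mem_sup.mp hmem
        refine ⟨w, hw, ?_⟩
        have h1 : l (z₀ - y) = l w := by
          rw [← hww', map_add, hW'0 w' hw', add_zero]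
        rw [map_sub] at h1
        intro h0
        rw [h0] at h1
        linarith
      set F := {z ∈ C | ∀ z' ∈ C, l z' ≤ l z} with hFdef
      have hyF : y ∈ F := ⟨hy, fun z' hz' => hle z' (hCsub hz')⟩
      have hexp : IsExposed ℝ C F := fun _ => ⟨l, rfl⟩
      have hFcomp : IsCompact F := hexp.isCompact hcomp
      have hFconv : Convex ℝ F := hexp.convex hconv
      have hFrank : Module.finrank ℝ (vectorSpan ℝ F) ≤ m := by
        obtain ⟨w₀, hw₀W, hw₀l⟩ := hlnz
        have hsub : vectorSpan ℝ F ≤ (LinearMap.ker (l : E →ₗ[ℝ] ℝ)) ⊓ W := by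
          rw [vectorSpan, Submodule.span_le]
          rintro _ ⟨f₁, h₁, f₂, h₂, rfl⟩
          constructor
          · have e1 : l f₁ ≤ l f₂ := h₂.2 f₁ h₁.1
            have e2 : l f₂ ≤ l f₁ := h₁.2 f₂ h₂.1
            have : l (f₁ -ᵥ f₂) = 0 := by
              rw [vsub_eq_sub, map_sub]; linarith
            simpa [LinearMap.mem_ker] using this
          · exact vsub_mem_vectorSpan ℝ h₁.1 h₂.1
        have hlt : (LinearMap.ker (l : E →ₗ[ℝ] ℝ)) ⊓ W < W := by
          refine lt_of_le_of_ne inf_le_right ?_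
          intro heq
          have : w₀ ∈ (LinearMap.ker (l : E →ₗ[ℝ] ℝ)) ⊓ W := by
            rw [heq]; exact hw₀W
          exact hw₀l (by simpa [LinearMap.mem_ker] using this.1)
        have h1 : Module.finrank ℝ (vectorSpan ℝ F) ≤
            Module.finrank ℝ ((LinearMap.ker (l : E →ₗ[ℝ] ℝ)) ⊓ W : Submodule ℝ E) :=
          Submodule.finrank_mono hsub
        have h2 := Submodule.finrank_lt_finrank_of_lt hlt
        omega
      have := ih F hFcomp hFconv hFrank hyF
      exact convexHull_mono hexp.isExtreme.extremePoints_subset_extremePoints this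
    -- now extract a direction from non-extremality of `p`
    rw [mem_extremePoints] at hpext
    push_neg at hpext
    obtain ⟨x₁, hx₁, x₂, hx₂, hseg, hne⟩ := hpext hp
    obtain ⟨a, b, ha, hb, hab, hcomb⟩ := hseg
    have hx12 : x₁ ≠ x₂ := by
      intro h
      have hx2p : x₂ = p := by
        rw [h] at hcomb
        have he : a • x₂ + b • x₂ = x₂ := by
          rw [← add_smul, hab, one_smul]
        rw [he] at hcomb
        exact hcomb
      exact hne (h.trans hx2p) hx2p
    set u := x₂ - x₁ with hu
    have huW : u ∈ vectorSpan ℝ C := by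
      simpa [hu, vsub_eq_sub] using vsub_mem_vectorSpan ℝ hx₂ hx₁
    have huW' : -u ∈ vectorSpan ℝ C := Submodule.neg_mem _ huW
    set T := {t : ℝ | p + t • u ∈ C} with hT
    have hTclosed : IsClosed T := by
      have hcont : Continuous fun t : ℝ => p + t • u :=
        continuous_const.add (continuous_id.smul continuous_const)
      exact hcomp.isClosed.preimage hcont
    have hTbdd : Bornology.IsBounded T := by
      obtain ⟨R, hR⟩ := hcomp.isBounded.subset_closedBall 0
      have hu0 : u ≠ 0 := sub_ne_zero.mpr (Ne.symm hx12)
      have hun : 0 < ‖u‖ := norm_pos_iff.mpr hu0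
      apply Bornology.IsBounded.subset (Metric.isBounded_closedBall
        (x := (0:ℝ)) (r := (R + ‖p‖) / ‖u‖))
      intro t htT
      have h1 : ‖p + t • u‖ ≤ R := by
        have := hR htT
        simpa [Metric.mem_closedBall, dist_eq_norm] using this
      have h2 : ‖t • u‖ ≤ ‖p + t • u‖ + ‖p‖ := by
        calc ‖t • u‖ = ‖(p + t • u) - p‖ := by rw [add_sub_cancel_left]
          _ ≤ ‖p + t • u‖ + ‖p‖ := norm_sub_le _ _
      rw [norm_smul, Real.norm_eq_abs] at h2
      simp only [Metric.mem_closedBall, dist_zero_right, Real.norm_eq_abs]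
      rw [le_div_iff₀ hun]
      linarith
    have hTcomp : IsCompact T := Metric.isCompact_iff_isClosed_bounded.mpr ⟨hTclosed, hTbdd⟩
    have haT : a ∈ T := by
      have : p + a • u = x₂ := by
        rw [hu]
        linear_combination (norm := module) -hcomb + hab • x₂
      rw [hT, Set.mem_setOf_eq, this]
      exact hx₂
    have hbT : -b ∈ T := by
      have : p + (-b) • u = x₁ := by
        rw [hu]
        linear_combination (norm := module) -hcomb + hab • x₁
      rw [hT, Set.mem_setOf_eq, this]
      exact hx₁
    have hTne : T.Nonempty := ⟨a, haT⟩
    set tP := sSup T with htP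
    set tM := sInf T with htM
    have htPT : tP ∈ T := hTcomp.sSup_mem hTne
    have htMT : tM ∈ T := hTcomp.sInf_mem hTne
    have hta : a ≤ tP := le_csSup hTcomp.isBounded.bddAbove haT
    have htb : tM ≤ -b := csInf_le hTcomp.isBounded.bddBelow hbT
    have htPpos : 0 < tP := lt_of_lt_of_le ha hta
    have htMneg : tM < 0 := lt_of_le_of_lt htb (by linarith)
    set xP := p + tP • u with hxPdef
    set xM := p + tM • u with hxMdef
    have hxPC : xP ∈ C := htPT
    have hxMC : xM ∈ C := htMT
    have hxPhull : xP ∈ convexHull ℝ (C.extremePoints ℝ) := by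
      refine haux xP hxPC u huW ?_
      intro ε hε hmem
      have : tP + ε ∈ T := by
        rw [hT, Set.mem_setOf_eq]
        have h1 : p + (tP + ε) • u = xP + ε • u := by
          rw [hxPdef]; module
        rw [h1]
        exact hmem
      have := le_csSup hTcomp.isBounded.bddAbove this
      linarith
    have hxMhull : xM ∈ convexHull ℝ (C.extremePoints ℝ) := by
      refine haux xM hxMC (-u) huW' ?_
      intro ε hε hmem
      have : tM - ε ∈ T := by
        rw [hT, Set.mem_setOf_eq]
        have h1 : p + (tM - ε) • u = xM + ε • (-u) := by
          rw [hxMdef]; module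
        rw [h1]
        exact hmem
      have := csInf_le hTcomp.isBounded.bddBelow this
      linarith
    have hd : tP - tM ≠ 0 := by linarith
    have hμ : p = (tP / (tP - tM)) • xM + (-tM / (tP - tM)) • xP := by
      rw [hxPdef, hxMdef]
      match_scalars <;> (field_simp; try ring)
    rw [hμ]
    exact (convex_convexHull ℝ _) hxMhull hxPhull
      (by apply div_nonneg <;> linarith) (by apply div_nonneg <;> linarith)
      (by field_simp; try ring)

end Minkowski



section Helpers

variable {n : ℕ}

private lemma sc_comb (v x y : Fin n → ℝ) (a b : ℝ) :
    ∑ i, (a • x + b • y) i * v i = a * (∑ i, x i * v i) + b * (∑ i, y i * v i) := by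
  rw [Finset.mul_sum, Finset.mul_sum, ← Finset.sum_add_distrib]
  refine Finset.sum_congr rfl fun i _ => ?_
  simp [Pi.add_apply, Pi.smul_apply, smul_eq_mul]
  ring

private lemma sc_add_smul (v x w : Fin n → ℝ) (t : ℝ) :
    ∑ i, (x + t • w) i * v i = (∑ i, x i * v i) + t * (∑ i, w i * v i) := by
  rw [Finset.mul_sum, ← Finset.sum_add_distrib]
  refine Finset.sum_congr rfl fun i _ => ?_
  simp [Pi.add_apply, Pi.smul_apply, smul_eq_mul]
  ring

private lemma sc_sub_smul (v x w : Fin n → ℝ) (t : ℝ) :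
    ∑ i, (x - t • w) i * v i = (∑ i, x i * v i) - t * (∑ i, w i * v i) := by
  rw [Finset.mul_sum, ← Finset.sum_sub_distrib]
  refine Finset.sum_congr rfl fun i _ => ?_
  simp [Pi.sub_apply, Pi.smul_apply, smul_eq_mul]
  ring

private lemma sc_cont (v : Fin n → ℝ) : Continuous fun x : Fin n → ℝ => ∑ i, x i * v i :=
  continuous_finset_sum _ fun i _ => (continuous_apply i).mul continuous_const

private lemma sc_vv_pos {v : Fin n → ℝ} (hv : v ≠ 0) : 0 < ∑ i, v i * v i := by
  have h1 : ∃ i, v i ≠ 0 := by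
    by_contra h
    push_neg at h
    exact hv (funext h)
  obtain ⟨i, hi⟩ := h1
  refine Finset.sum_pos' (fun j _ => mul_self_nonneg _) ⟨i, Finset.mem_univ i, ?_⟩
  exact mul_self_pos.mpr hi

private lemma isClosed_level (v : Fin n → ℝ) (c : ℝ) :
    IsClosed {x : Fin n → ℝ | ∑ i, x i * v i = c} :=
  isClosed_eq (sc_cont v) continuous_const

private lemma convex_level (v : Fin n → ℝ) (c : ℝ) :
    Convex ℝ {x : Fin n → ℝ | ∑ i, x i * v i = c} := by
  intro x hx y hy a b ha hb hab
  simp only [Set.mem_setOf_eq] at *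
  rw [sc_comb, hx, hy, ← add_mul, hab, one_mul]

end Helpers

section Lplus

theorem my_lplus {n : ℕ} {K : Set (Fin n → ℝ)} (hconv : Convex ℝ K) (hcomp : IsCompact K)
    {v : Fin n → ℝ} (hv : v ≠ 0) (c : ℝ)
    (hproj : (fun x => x - (((∑ i, x i * v i) - c) / (∑ i, v i * v i)) • v) '' K
        = K ∩ {x | ∑ i, x i * v i = c})
    (hext : Set.extremePoints ℝ K ∩ {x | ∑ i, x i * v i = c} = ∅) :
    ∀ p ∈ K ∩ {x | ∑ i, x i * v i = c}, ∃ h : ℝ, 0 < h ∧ p + h • v ∈ K := by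
  have hV : 0 < ∑ i, v i * v i := sc_vv_pos hv
  set V : ℝ := ∑ i, v i * v i with hVdef
  set s : (Fin n → ℝ) → ℝ := fun x => ((∑ i, x i * v i) - c) / V with hsdef
  set C : Set (Fin n → ℝ) := K ∩ {x | ∑ i, x i * v i = c} with hCdef
  have hπK : ∀ x ∈ K, x - s x • v ∈ C := by
    intro x hx
    rw [← hproj]
    exact ⟨x, hx, rfl⟩
  have hCcomp : IsCompact C := hcomp.inter_right (isClosed_level v c)
  have hCconv : Convex ℝ C := hconv.inter (convex_level v c)
  -- extreme points of C admit a point of K strictly above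
  have hextC : ∀ e ∈ C.extremePoints ℝ, ∃ h : ℝ, 0 < h ∧ e + h • v ∈ K := by
    intro e he
    by_contra hno
    push_neg at hno
    have heC : e ∈ C := extremePoints_subset he
    have heH : ∑ i, e i * v i = c := heC.2
    have heK : e ∈ Set.extremePoints ℝ K := by
      rw [mem_extremePoints]
      refine ⟨heC.1, ?_⟩
      intro x₁ h₁ x₂ h₂ hseg
      obtain ⟨a, b, ha, hb, hab, hcomb⟩ := hseg
      have hp₁ : x₁ - s x₁ • v ∈ C := hπK x₁ h₁
      have hp₂ : x₂ - s x₂ • v ∈ C := hπK x₂ h₂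
      have hsum : ∑ i, (a • x₁ + b • x₂) i * v i = c := by rw [hcomb]; exact heH
      rw [sc_comb] at hsum
      have hVne : V ≠ 0 := ne_of_gt hV
      have hs12 : a * s x₁ + b * s x₂ = 0 := by
        rw [hsdef]
        field_simp
        linear_combination hsum - c * hab
      have hπe : a • (x₁ - s x₁ • v) + b • (x₂ - s x₂ • v) = e := by
        linear_combination (norm := module) hcomb - hs12 • v
      obtain ⟨hq₁, hq₂⟩ := (mem_extremePoints.mp he).2 _ hp₁ _ hp₂ ⟨a, b, ha, hb, hab, hπe⟩
      have hx₁e : x₁ = e + s x₁ • v := by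
        rw [← hq₁]; module
      have hx₂e : x₂ = e + s x₂ • v := by
        rw [← hq₂]; module
      have hs₁ : s x₁ ≤ 0 := by
        by_contra hpos
        push_neg at hpos
        exact hno (s x₁) hpos (hx₁e ▸ h₁)
      have hs₂ : s x₂ ≤ 0 := by
        by_contra hpos
        push_neg at hpos
        exact hno (s x₂) hpos (hx₂e ▸ h₂)
      have hz₁ : s x₁ = 0 := by nlinarith
      have hz₂ : s x₂ = 0 := by nlinarith
      constructor
      · rw [hx₁e, hz₁, zero_smul, add_zero]
      · rw [hx₂e, hz₂, zero_smul, add_zero]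
    exact Set.eq_empty_iff_forall_notMem.mp hext e ⟨heK, heH⟩
  -- the set of points with a point of K strictly above is convex and contains ext C
  set Cp : Set (Fin n → ℝ) := {q | q ∈ C ∧ ∃ h : ℝ, 0 < h ∧ q + h • v ∈ K} with hCp
  have hCpconv : Convex ℝ Cp := by
    intro q₁ hq₁ q₂ hq₂ a b ha hb hab
    obtain ⟨hq₁C, h₁, hh₁, hk₁⟩ := hq₁
    obtain ⟨hq₂C, h₂, hh₂, hk₂⟩ := hq₂
    refine ⟨hCconv hq₁C hq₂C ha hb hab, a * h₁ + b * h₂, ?_, ?_⟩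
    · rcases lt_or_eq_of_le ha with ha' | ha'
      · nlinarith
      · have hb1 : b = 1 := by linarith
        rw [← ha', hb1]; simpa using hh₂
    · have : (a • q₁ + b • q₂) + (a * h₁ + b * h₂) • v
          = a • (q₁ + h₁ • v) + b • (q₂ + h₂ • v) := by module
      rw [this]
      exact hconv hk₁ hk₂ ha hb hab
  intro p hp
  have hpC : p ∈ convexHull ℝ (C.extremePoints ℝ) := my_minkowski hCcomp hCconv hp
  have hsub : convexHull ℝ (C.extremePoints ℝ) ⊆ Cp :=
    convexHull_min (fun e he => ⟨extremePoints_subset he, hextC e he⟩) hCpconv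
  exact (hsub hpC).2

end Lplus

private lemma sc_sub {n : ℕ} (v x y : Fin n → ℝ) :
    ∑ i, (x - y) i * v i = (∑ i, x i * v i) - ∑ i, y i * v i := by
  rw [← Finset.sum_sub_distrib]
  refine Finset.sum_congr rfl fun i _ => ?_
  simp [Pi.sub_apply]
  ring

set_option maxHeartbeats 2000000 in
theorem my_core {n : ℕ} (hn : 2 ≤ n) {K : Set (Fin n → ℝ)}
    (hconv : Convex ℝ K) (hcomp : IsCompact K) (hint : (interior K).Nonempty)
    {v : Fin n → ℝ} (hv : v ≠ 0) (c : ℝ)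
    (hproj : (fun x => x - (((∑ i, x i * v i) - c) / (∑ i, v i * v i)) • v) '' K
        = K ∩ {x | ∑ i, x i * v i = c})
    (hext : Set.extremePoints ℝ K ∩ {x | ∑ i, x i * v i = c} = ∅)
    (D : Finset (Fin n → ℝ))
    (hDpar : ∀ d ∈ D, ∑ i, d i * v i = 0)
    (hDill : ∀ p ∈ intrinsicFrontier ℝ (K ∩ {x | ∑ i, x i * v i = c}),
      ∃ d ∈ D, ∃ ε : ℝ, 0 < ε ∧
        p + ε • d ∈ intrinsicInterior ℝ (K ∩ {x | ∑ i, x i * v i = c})) :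
    ∃ D' : Finset (Fin n → ℝ), (∀ d ∈ D', d ≠ 0) ∧ D'.card ≤ 2 * D.card ∧
      IlluminatesSet K ↑D' := by
  classical
  have hV : 0 < ∑ i, v i * v i := sc_vv_pos hv
  set V : ℝ := ∑ i, v i * v i with hVdef
  have hVne : V ≠ 0 := ne_of_gt hV
  set s : (Fin n → ℝ) → ℝ := fun x => ((∑ i, x i * v i) - c) / V with hsdef
  set C : Set (Fin n → ℝ) := K ∩ {x | ∑ i, x i * v i = c} with hCdef
  have hπK : ∀ x ∈ K, x - s x • v ∈ C := by
    intro x hx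
    rw [← hproj]
    exact ⟨x, hx, rfl⟩
  have hCcomp : IsCompact C := hcomp.inter_right (isClosed_level v c)
  have hCconv : Convex ℝ C := hconv.inter (convex_level v c)
  have hCK : C ⊆ K := Set.inter_subset_left
  have hClevel : ∀ q ∈ C, ∑ i, q i * v i = c := fun q hq => hq.2
  have hLp : ∀ p ∈ C, ∃ h : ℝ, 0 < h ∧ p + h • v ∈ K :=
    my_lplus hconv hcomp hv c hproj hext
  have hsum_neg : ∀ x : Fin n → ℝ, (∑ i, x i * (-v) i) = -(∑ i, x i * v i) := by
    intro x
    simp [Pi.neg_apply, mul_neg]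
  have hset_neg : {x : Fin n → ℝ | ∑ i, x i * (-v) i = -c} = {x | ∑ i, x i * v i = c} := by
    ext x
    simp only [Set.mem_setOf_eq, hsum_neg x]
    constructor <;> intro h <;> linarith
  have hLm : ∀ p ∈ C, ∃ h : ℝ, 0 < h ∧ p - h • v ∈ K := by
    have hv' : -v ≠ 0 := neg_ne_zero.mpr hv
    have hfun_eq : (fun x : Fin n → ℝ =>
        x - (((∑ i, x i * (-v) i) - (-c)) / (∑ i, (-v) i * (-v) i)) • (-v))
        = (fun x => x - (((∑ i, x i * v i) - c) / (∑ i, v i * v i)) • v) := by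
      funext x
      rw [hsum_neg]
      have h2 : (∑ i, (-v) i * (-v) i) = ∑ i, v i * v i := by
        simp [Pi.neg_apply, neg_mul_neg]
      rw [h2, show (-(∑ i, x i * v i) - -c) = -((∑ i, x i * v i) - c) by ring,
        neg_div, neg_smul, smul_neg, neg_neg]
    have hall := my_lplus hconv hcomp hv' (-c)
      (by rw [hfun_eq, hset_neg]; exact hproj) (by rw [hset_neg]; exact hext)
    intro p hp
    have hp' : p ∈ K ∩ {x | ∑ i, x i * (-v) i = -c} := by rw [hset_neg]; exact hp
    obtain ⟨h, hh, hK'⟩ := hall p hp'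
    refine ⟨h, hh, ?_⟩
    rw [smul_neg] at hK'
    rwa [sub_eq_add_neg]
  obtain ⟨z₀, hz₀⟩ := hint
  obtain ⟨r₀, hr₀, hball₀⟩ := Metric.isOpen_iff.mp isOpen_interior z₀ hz₀
  have hz₀K : z₀ ∈ K := interior_subset hz₀
  set q₀ : Fin n → ℝ := z₀ - s z₀ • v with hq₀def
  have hq₀C : q₀ ∈ C := hπK z₀ hz₀K
  have hCne : C.Nonempty := ⟨q₀, hq₀C⟩
  -- span claim
  have hSP : ∀ z : Fin n → ℝ, (∑ i, z i * v i = c) → z ∈ affineSpan ℝ C := by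
    intro z hz
    set w : Fin n → ℝ := z - q₀ with hwdef
    by_cases hw0 : w = 0
    · have hzq : z = q₀ := by
        have h1 := hw0
        rw [hwdef, sub_eq_zero] at h1
        exact h1
      rw [hzq]
      exact subset_affineSpan ℝ C hq₀C
    · have hwn : 0 < ‖w‖ := norm_pos_iff.mpr hw0
      set ε : ℝ := r₀ / (2 * ‖w‖) with hεdef
      have hε : 0 < ε := by positivity
      have hscw : ∑ i, w i * v i = 0 := by
        rw [hwdef, sc_sub, hz, hClevel q₀ hq₀C, sub_self]
      have hzballK : z₀ + ε • w ∈ K := by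
        apply interior_subset
        apply hball₀
        rw [Metric.mem_ball, dist_eq_norm, add_sub_cancel_left, norm_smul,
          Real.norm_eq_abs, abs_of_pos hε, hεdef]
        rw [div_mul_eq_mul_div, div_lt_iff₀ (by positivity)]
        nlinarith
      have hsz : s (z₀ + ε • w) = s z₀ := by
        rw [hsdef]
        simp only []
        rw [sc_add_smul, hscw, mul_zero, add_zero]
      have hq₁C : q₀ + ε • w ∈ C := by
        have h1 := hπK (z₀ + ε • w) hzballK
        rw [hsz] at h1
        have heq : z₀ + ε • w - s z₀ • v = q₀ + ε • w := by
          rw [hq₀def]; module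
        rwa [heq] at h1
      have hz_eq : (1 / ε) • ((q₀ + ε • w) -ᵥ q₀) +ᵥ q₀ = z := by
        rw [vsub_eq_sub, vadd_eq_add]
        have h1 : q₀ + ε • w - q₀ = ε • w := by module
        rw [h1, smul_smul, one_div, inv_mul_cancel₀ (ne_of_gt hε), one_smul, hwdef]
        module
      rw [← hz_eq]
      exact AffineSubspace.smul_vsub_vadd_mem _ (1 / ε)
        (subset_affineSpan ℝ C hq₁C) (subset_affineSpan ℝ C hq₀C)
        (subset_affineSpan ℝ C hq₀C)
  -- relative ball property
  have hRB : ∀ q ∈ intrinsicInterior ℝ C, ∃ r : ℝ, 0 < r ∧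
      ∀ z : Fin n → ℝ, (∑ i, z i * v i = c) → ‖z - q‖ < r → z ∈ C := by
    rintro q ⟨y, hy, rfl⟩
    rw [mem_interior_iff_mem_nhds, Metric.mem_nhds_iff] at hy
    obtain ⟨r, hr, hball⟩ := hy
    refine ⟨r, hr, ?_⟩
    intro z hz hznorm
    have hzspan : z ∈ affineSpan ℝ C := hSP z hz
    have hmem : (⟨z, hzspan⟩ : affineSpan ℝ C) ∈ Metric.ball y r := by
      rw [Metric.mem_ball, Subtype.dist_eq, dist_eq_norm]
      exact hznorm
    exact hball hmem
  set S : ℝ := ∑ i, |v i| with hSdef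
  have hS0 : 0 ≤ S := Finset.sum_nonneg fun i _ => abs_nonneg _
  have hscbound : ∀ w : Fin n → ℝ, |∑ i, w i * v i| ≤ ‖w‖ * S := by
    intro w
    calc |∑ i, w i * v i| ≤ ∑ i, |w i * v i| := Finset.abs_sum_le_sum_abs _ _
      _ ≤ ∑ i, ‖w‖ * |v i| := by
          refine Finset.sum_le_sum fun i _ => ?_
          rw [abs_mul]
          have h1 : |w i| ≤ ‖w‖ := by
            have h2 := norm_le_pi_norm w i
            simpa [Real.norm_eq_abs] using h2
          exact mul_le_mul_of_nonneg_right h1 (abs_nonneg _)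
      _ = ‖w‖ * S := by rw [hSdef, Finset.mul_sum]
  -- intrinsic interior of C is inside interior of K
  have hC2 : ∀ q ∈ intrinsicInterior ℝ C, q ∈ interior K := by
    intro q hq
    obtain ⟨r, hr, hrel⟩ := hRB q hq
    have hqC : q ∈ C := intrinsicInterior_subset hq
    have hqlevel : ∑ i, q i * v i = c := hClevel q hqC
    obtain ⟨hp, hhp, hpK⟩ := hLp q hqC
    obtain ⟨hm, hhm, hmK⟩ := hLm q hqC
    set L : ℝ := 1 + S * ‖v‖ / V with hLdef
    have hL1 : 1 ≤ L := by
      rw [hLdef]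
      have h1 : 0 ≤ S * ‖v‖ / V := by positivity
      linarith
    have hLpos : 0 < L := by linarith
    set r' : ℝ := min (r / (2 * L)) (min (hp * V / (2 * (S + 1))) (hm * V / (2 * (S + 1))))
      with hr'def
    have hr'pos : 0 < r' :=
      lt_min (by positivity) (lt_min (by positivity) (by positivity))
    have hball : ∀ u ∈ Metric.ball q r', u ∈ K := by
      intro u hu
      rw [Metric.mem_ball, dist_eq_norm] at hu
      set σ : ℝ := s u with hσdef
      have hσbound : |σ| * V ≤ ‖u - q‖ * S := by
        rw [hσdef, hsdef]
        simp only []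
        rw [abs_div, abs_of_pos hV, div_mul_cancel₀ _ hVne]
        have h1 : (∑ i, u i * v i) - c = ∑ i, (u - q) i * v i := by
          rw [sc_sub, hqlevel]
        rw [h1]
        exact hscbound _
      have hkey : ∀ h0 : ℝ, 0 < h0 → r' ≤ h0 * V / (2 * (S + 1)) → |σ| ≤ h0 / 2 := by
        intro h0 hh0 hle
        have h2 : r' * (2 * (S + 1)) ≤ h0 * V := (le_div_iff₀ (by positivity)).mp hle
        have h3 : |σ| * V ≤ (h0 / 2) * V := by nlinarith [abs_nonneg σ, norm_nonneg (u - q)]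
        exact le_of_mul_le_mul_right h3 hV
      have hσp : |σ| ≤ hp / 2 :=
        hkey hp hhp (le_trans (min_le_right _ _) (min_le_left _ _))
      have hσm : |σ| ≤ hm / 2 :=
        hkey hm hhm (le_trans (min_le_right _ _) (min_le_right _ _))
      set pu : Fin n → ℝ := u - σ • v with hpudef
      have hpulevel : ∑ i, pu i * v i = c := by
        rw [hpudef, sc_sub_smul, hσdef, hsdef]
        field_simp
        simp only [hVdef, pow_two]; ring
      have hpuq : ‖pu - q‖ ≤ L * ‖u - q‖ := by
        have h1 : pu - q = (u - q) - σ • v := by rw [hpudef]; module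
        have hσ1 : |σ| ≤ ‖u - q‖ * S / V := by
          rw [le_div_iff₀ hV]
          exact hσbound
        calc ‖pu - q‖ = ‖(u - q) - σ • v‖ := by rw [h1]
          _ ≤ ‖u - q‖ + ‖σ • v‖ := norm_sub_le _ _
          _ = ‖u - q‖ + |σ| * ‖v‖ := by rw [norm_smul, Real.norm_eq_abs]
          _ ≤ ‖u - q‖ + (‖u - q‖ * S / V) * ‖v‖ := by
              have := mul_le_mul_of_nonneg_right hσ1 (norm_nonneg v)
              linarith
          _ = L * ‖u - q‖ := by rw [hLdef]; ring
      have hr'r : 2 * L * r' ≤ r := by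
        have h1 : r' ≤ r / (2 * L) := min_le_left _ _
        rw [le_div_iff₀ (by positivity)] at h1
        linarith
      rcases le_or_gt 0 σ with hσ0 | hσ0
      · -- go up to the point q + hp • v
        set θ : ℝ := σ / hp with hθdef
        have hθ0 : 0 ≤ θ := by positivity
        have hθhalf : θ ≤ 1 / 2 := by
          rw [hθdef, div_le_iff₀ hhp]
          have h1 : σ ≤ |σ| := le_abs_self σ
          linarith
        have hθ1 : (1:ℝ) - θ ≠ 0 := by intro h; rw [sub_eq_zero] at h; linarith
        have hθhalf' : (1:ℝ)/2 ≤ 1 - θ := by linarith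
        set z : Fin n → ℝ := q + (1 / (1 - θ)) • (pu - q) with hzdef
        have hzlevel : ∑ i, z i * v i = c := by
          rw [hzdef, sc_add_smul, sc_sub, hpulevel, hqlevel, sub_self, mul_zero, add_zero]
        have hznorm : ‖z - q‖ < r := by
          have h1 : z - q = (1 / (1 - θ)) • (pu - q) := by rw [hzdef]; module
          have h2 : ‖z - q‖ = (1 / (1 - θ)) * ‖pu - q‖ := by
            have hpos1θ : (0:ℝ) < 1 - θ := by linarith
            rw [h1, norm_smul, Real.norm_eq_abs, abs_of_pos (div_pos one_pos hpos1θ)]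
          have h3 : (1:ℝ) / (1 - θ) ≤ 2 := by
            rw [div_le_iff₀ (by linarith)]
            linarith
          have h4 : ‖pu - q‖ ≤ L * ‖u - q‖ := hpuq
          have h5 : ‖u - q‖ < r' := hu
          rw [h2]
          nlinarith [norm_nonneg (pu - q), norm_nonneg (u - q)]
        have hzC : z ∈ C := hrel z hzlevel hznorm
        have hhpne : hp ≠ 0 := ne_of_gt hhp
        have hhpσ : hp - σ ≠ 0 := by
          have h6 : σ ≤ |σ| := le_abs_self σ
          intro hcon
          nlinarith
        have hcombo : u = (1 - θ) • z + θ • (q + hp • v) := by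
          rw [hzdef, hpudef, hθdef]
          match_scalars <;> (field_simp; try ring)
        rw [hcombo]
        exact hconv (hCK hzC) hpK (by linarith) (by linarith) (by ring)
      · -- go down to the point q - hm • v
        set θ : ℝ := -σ / hm with hθdef
        have hθ0 : 0 ≤ θ := by
          rw [hθdef]
          apply div_nonneg (by linarith) (by linarith)
        have hθhalf : θ ≤ 1 / 2 := by
          rw [hθdef, div_le_iff₀ hhm]
          have h1 : -σ ≤ |σ| := neg_le_abs σ
          linarith
        have hθ1 : (1:ℝ) - θ ≠ 0 := by intro h; rw [sub_eq_zero] at h; linarith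
        set z : Fin n → ℝ := q + (1 / (1 - θ)) • (pu - q) with hzdef
        have hzlevel : ∑ i, z i * v i = c := by
          rw [hzdef, sc_add_smul, sc_sub, hpulevel, hqlevel, sub_self, mul_zero, add_zero]
        have hznorm : ‖z - q‖ < r := by
          have h1 : z - q = (1 / (1 - θ)) • (pu - q) := by rw [hzdef]; module
          have h2 : ‖z - q‖ = (1 / (1 - θ)) * ‖pu - q‖ := by
            have hpos1θ : (0:ℝ) < 1 - θ := by linarith
            rw [h1, norm_smul, Real.norm_eq_abs, abs_of_pos (div_pos one_pos hpos1θ)]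
          have h3 : (1:ℝ) / (1 - θ) ≤ 2 := by
            rw [div_le_iff₀ (by linarith)]
            linarith
          have h5 : ‖u - q‖ < r' := hu
          rw [h2]
          nlinarith [norm_nonneg (pu - q), norm_nonneg (u - q), hpuq]
        have hzC : z ∈ C := hrel z hzlevel hznorm
        have hhmne : hm ≠ 0 := ne_of_gt hhm
        have hhmσ : hm + σ ≠ 0 := by
          have h6 : -σ ≤ |σ| := neg_le_abs σ
          intro hcon
          nlinarith
        have hσhm : σ + hm ≠ 0 := by rwa [add_comm]
        have hcombo : u = (1 - θ) • z + θ • (q - hm • v) := by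
          rw [hzdef, hpudef, hθdef]
          match_scalars <;> (field_simp; try ring) <;> field_simp <;> ring
        rw [hcombo]
        exact hconv (hCK hzC) hmK (by linarith) (by linarith) (by ring)
    exact mem_interior.mpr ⟨Metric.ball q r', hball, Metric.isOpen_ball,
      Metric.mem_ball_self hr'pos⟩
  -- the set D is nonempty
  have hDne : D.Nonempty := by
    by_contra hD
    rw [Finset.not_nonempty_iff_eq_empty] at hD
    have hfront : intrinsicFrontier ℝ C = ∅ := by
      by_contra hne
      rw [← Ne, ← Set.nonempty_iff_ne_empty] at hne
      obtain ⟨p, hp⟩ := hne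
      obtain ⟨d, hd, _⟩ := hDill p hp
      rw [hD] at hd
      exact absurd hd (Finset.notMem_empty d)
    have hCsubint : C ⊆ intrinsicInterior ℝ C := by
      intro p hp
      have h1 : p ∈ intrinsicClosure ℝ C := subset_intrinsicClosure hp
      rw [← intrinsicInterior_union_intrinsicFrontier] at h1
      rcases h1 with h | h
      · exact h
      · rw [hfront] at h
        exact absurd h (Set.notMem_empty p)
    obtain ⟨i, hi⟩ : ∃ i, v i ≠ 0 := by
      by_contra h
      push_neg at h
      exact hv (funext h)
    obtain ⟨j, hj⟩ : ∃ j : Fin n, j ≠ i :=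
      Fintype.exists_ne_of_one_lt_card (by simp; omega) i
    set w : Fin n → ℝ := v i • (Pi.single j 1 : Fin n → ℝ) - v j • (Pi.single i 1 : Fin n → ℝ) with hwdef
    have hw0 : w ≠ 0 := by
      intro h
      apply hi
      have h1 := congrFun h j
      rw [hwdef] at h1
      simpa [Pi.sub_apply, Pi.smul_apply, Pi.single_eq_same,
        Pi.single_eq_of_ne hj, smul_eq_mul] using h1
    have hscw : ∑ i', w i' * v i' = 0 := by
      rw [hwdef]
      rw [sc_sub]
      have h1 : ∀ (k : Fin n) (a : ℝ), ∑ i', (a • (Pi.single k 1 : Fin n → ℝ)) i' * v i' = a * v k := by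
        intro k a
        rw [Finset.sum_eq_single k]
        · simp [Pi.smul_apply, Pi.single_eq_same, smul_eq_mul]
        · intro b _ hb
          simp [Pi.smul_apply, Pi.single_eq_of_ne hb, smul_eq_mul]
        · intro hk
          exact absurd (Finset.mem_univ k) hk
      rw [h1, h1]
      ring
    have hwc : Continuous fun x : Fin n → ℝ => ∑ i', x i' * w i' := sc_cont w
    obtain ⟨y, hyC, hymax⟩ := hCcomp.exists_isMaxOn hCne hwc.continuousOn
    have hyint : y ∈ interior K := hC2 y (hCsubint hyC)
    obtain ⟨r, hr, hball⟩ := Metric.isOpen_iff.mp isOpen_interior y hyint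
    have hwn : 0 < ‖w‖ := norm_pos_iff.mpr hw0
    set ε : ℝ := r / (2 * ‖w‖) with hεdef
    have hε : 0 < ε := by positivity
    have hyw : y + ε • w ∈ K := by
      apply interior_subset
      apply hball
      rw [Metric.mem_ball, dist_eq_norm, add_sub_cancel_left, norm_smul,
        Real.norm_eq_abs, abs_of_pos hε, hεdef]
      rw [div_mul_eq_mul_div, div_lt_iff₀ (by positivity)]
      nlinarith
    have hywC : y + ε • w ∈ C := ⟨hyw, by
      show ∑ i', (y + ε • w) i' * v i' = c
      rw [sc_add_smul, hscw, mul_zero, add_zero]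
      exact hClevel y hyC⟩
    have h1 := hymax hywC
    simp only [Set.mem_setOf_eq] at h1
    have h2 : ∑ i', (y + ε • w) i' * w i' = (∑ i', y i' * w i') + ε * ∑ i', w i' * w i' :=
      sc_add_smul w y w ε
    have h3 : 0 < ∑ i', w i' * w i' := sc_vv_pos hw0
    have h4 : (∑ i', (y + ε • w) i' * w i') ≤ ∑ i', y i' * w i' := h1
    nlinarith
  -- uniform inner-direction property (claim B*)
  have hpoint : ∀ q ∈ C, ∃ d, d ∈ D ∧ ∃ ε : ℝ, 0 < ε ∧ ∃ r : ℝ, 0 < r ∧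
      ∀ p' ∈ Metric.ball q r, p' + ε • d ∈ interior K := by
    intro q hq
    by_cases hqi : q ∈ intrinsicInterior ℝ C
    · have hqint : q ∈ interior K := hC2 q hqi
      obtain ⟨r, hr, hball⟩ := Metric.isOpen_iff.mp isOpen_interior q hqint
      obtain ⟨d₀, hd₀⟩ := hDne
      refine ⟨d₀, hd₀, r / (2 * (‖d₀‖ + 1)), by positivity, r / 2, by positivity, ?_⟩
      intro p' hp'
      apply hball
      rw [Metric.mem_ball] at hp' ⊢
      calc dist (p' + (r / (2 * (‖d₀‖ + 1))) • d₀) q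
          ≤ dist (p' + (r / (2 * (‖d₀‖ + 1))) • d₀) p' + dist p' q := dist_triangle _ _ _
        _ < r := by
            have h1 : dist (p' + (r / (2 * (‖d₀‖ + 1))) • d₀) p'
                = (r / (2 * (‖d₀‖ + 1))) * ‖d₀‖ := by
              rw [dist_eq_norm, add_sub_cancel_left, norm_smul, Real.norm_eq_abs,
                abs_of_pos (by positivity)]
            have h2 : (r / (2 * (‖d₀‖ + 1))) * ‖d₀‖ < r / 2 := by
              rw [div_mul_eq_mul_div, div_lt_iff₀ (by positivity)]
              nlinarith [norm_nonneg d₀]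
            linarith
    · have hqf : q ∈ intrinsicFrontier ℝ C := by
        have h1 : q ∈ intrinsicClosure ℝ C := subset_intrinsicClosure hq
        rw [← intrinsicInterior_union_intrinsicFrontier] at h1
        rcases h1 with h | h
        · exact absurd h hqi
        · exact h
      obtain ⟨d, hd, ε, hε, hintd⟩ := hDill q hqf
      have hqd : q + ε • d ∈ interior K := hC2 _ hintd
      obtain ⟨r, hr, hball⟩ := Metric.isOpen_iff.mp isOpen_interior _ hqd
      refine ⟨d, hd, ε, hε, r, hr, ?_⟩
      intro p' hp'
      apply hball
      rw [Metric.mem_ball] at hp' ⊢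
      rw [dist_add_right]
      exact hp'
  choose! dfun hdD εfun hεpos rfun hrpos hprop using hpoint
  obtain ⟨t, htC, hcover⟩ := hCcomp.elim_nhds_subcover (fun q => Metric.ball q (rfun q))
    (fun q hq => Metric.ball_mem_nhds q (hrpos q hq))
  have htne : t.Nonempty := by
    obtain ⟨p0, hp0⟩ := hCne
    have h1 := hcover hp0
    rw [Set.mem_iUnion₂] at h1
    obtain ⟨q, hqt, _⟩ := h1
    exact ⟨q, hqt⟩
  set ρ : ℝ := t.inf' htne εfun with hρdef
  have hρpos : 0 < ρ := by
    rw [hρdef, Finset.lt_inf'_iff]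
    intro q hq
    exact hεpos q (htC q hq)
  have hB : ∀ p ∈ C, ∃ d ∈ D, ∀ ε : ℝ, 0 < ε → ε ≤ ρ → p + ε • d ∈ interior K := by
    intro p hp
    have h1 := hcover hp
    rw [Set.mem_iUnion₂] at h1
    obtain ⟨q, hqt, hpball⟩ := h1
    have hqC : q ∈ C := htC q hqt
    refine ⟨dfun q, hdD q hqC, ?_⟩
    intro ε hε hερ
    have hbig : p + εfun q • dfun q ∈ interior K := hprop q hqC p hpball
    have hεq : ε ≤ εfun q := le_trans hερ (Finset.inf'_le εfun hqt)
    have hεqpos : 0 < εfun q := hεpos q hqC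
    have hεqne : εfun q ≠ 0 := ne_of_gt hεqpos
    have hcombo : p + ε • dfun q
        = (ε / εfun q) • (p + εfun q • dfun q) + (1 - ε / εfun q) • p := by
      match_scalars <;> field_simp <;> ring
    rw [hcombo]
    refine hconv.combo_interior_self_mem_interior hbig (hCK hp) (by positivity) ?_ (by ring)
    have h2 : ε / εfun q ≤ 1 := by
      rw [div_le_one hεqpos]
      exact hεq
    linarith
  -- the height bound
  obtain ⟨R, hR⟩ := hcomp.isBounded.subset_closedBall 0
  have hR0 : 0 ≤ R := by
    have h1 := hR (hCK hq₀C)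
    rw [Metric.mem_closedBall, dist_zero_right] at h1
    exact le_trans (norm_nonneg _) h1
  set M : ℝ := (R * S + |c|) / V + 1 with hMdef
  have hM1 : 0 < M := by positivity
  have hsbound : ∀ x ∈ K, |s x| ≤ M - 1 := by
    intro x hx
    rw [hsdef, hMdef]
    simp only [add_sub_cancel_right]
    rw [abs_div, abs_of_pos hV, div_le_div_iff₀ hV hV]
    have h1 : |(∑ i, x i * v i) - c| ≤ ‖x‖ * S + |c| := by
      have h2 := hscbound x
      have h3 := abs_sub_abs_le_abs_sub (∑ i, x i * v i) c
      have h4 := abs_sub (∑ i, x i * v i) c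
      calc |(∑ i, x i * v i) - c| ≤ |∑ i, x i * v i| + |c| := abs_sub _ _
        _ ≤ ‖x‖ * S + |c| := by linarith
    have h5 : ‖x‖ ≤ R := by
      have h6 := hR hx
      rwa [Metric.mem_closedBall, dist_zero_right] at h6
    have h7 : |(∑ i, x i * v i) - c| ≤ R * S + |c| := by
      nlinarith [norm_nonneg x, hS0]
    exact mul_le_mul_of_nonneg_right h7 hV.le
  set δ : ℝ := M / ρ with hδdef
  have hδpos : 0 < δ := by positivity
  have hδne : δ ≠ 0 := ne_of_gt hδpos
  -- the direction set
  set D' : Finset (Fin n → ℝ) :=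
    D.image (fun d => d + δ • v) ∪ D.image (fun d => d - δ • v) with hD'def
  have hscδv : ∀ d ∈ D, ∑ i, (d + δ • v) i * v i = δ * V := by
    intro d hd
    rw [sc_add_smul, hDpar d hd, zero_add]
  have hscδv' : ∀ d ∈ D, ∑ i, (d - δ • v) i * v i = -(δ * V) := by
    intro d hd
    rw [sc_sub_smul, hDpar d hd, zero_sub]
  refine ⟨D', ?_, ?_, ?_⟩
  · -- nonzero
    intro d' hd'
    rw [hD'def, Finset.mem_union] at hd'
    rcases hd' with hd' | hd' <;> rw [Finset.mem_image] at hd' <;>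
      obtain ⟨d, hd, rfl⟩ := hd' <;> intro h0
    · have h1 := hscδv d hd
      rw [h0] at h1
      simp only [Pi.zero_apply, zero_mul, Finset.sum_const_zero] at h1
      nlinarith
    · have h1 := hscδv' d hd
      rw [h0] at h1
      simp only [Pi.zero_apply, zero_mul, Finset.sum_const_zero] at h1
      nlinarith
  · -- cardinality
    calc D'.card ≤ (D.image (fun d => d + δ • v)).card + (D.image (fun d => d - δ • v)).card :=
        Finset.card_union_le _ _
      _ ≤ D.card + D.card := add_le_add (Finset.card_image_le) (Finset.card_image_le)
      _ = 2 * D.card := (two_mul _).symm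
  · -- illumination
    intro x hx
    have hxK : x ∈ K := hcomp.isClosed.frontier_subset hx
    have hxnotint : x ∉ interior K := by
      rw [frontier, Set.mem_diff] at hx
      exact hx.2
    set p : Fin n → ℝ := x - s x • v with hpdef
    have hpC : p ∈ C := hπK x hxK
    set σ : ℝ := s x with hσdef
    have hxp : x = p + σ • v := by rw [hpdef]; module
    obtain ⟨d, hdD, hd⟩ := hB p hpC
    have hσM : |σ| ≤ M - 1 := hsbound x hxK
    rcases lt_trichotomy σ 0 with hσ | hσ | hσ
    · -- below the hyperplane: direction d + δ • v
      refine ⟨d + δ • v, by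
        rw [hD'def]
        exact Finset.mem_coe.mpr (Finset.mem_union_left _ (Finset.mem_image_of_mem _ hdD)), ?_⟩
      have hσδpos : 0 < -σ / δ := div_pos (by linarith) hδpos
      refine ⟨-σ / δ, hσδpos, ?_⟩
      have he : (-σ / δ) * δ = -σ := by field_simp
      have hid : x + (-σ / δ) • (d + δ • v) = p + (-σ / δ) • d := by
        rw [hxp]
        linear_combination (norm := module) he • v
      rw [hid]
      refine hd _ hσδpos ?_
      have h1 : -σ ≤ M := by
        have h2 := neg_le_abs σ
        linarith
      have h2 : -σ / δ ≤ M / δ := (div_le_div_iff_of_pos_right hδpos).mpr h1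
      have h3 : M / δ = ρ := by
        rw [hδdef]
        field_simp
      rw [h3] at h2
      exact h2
    · -- on the hyperplane
      obtain ⟨h, hh, hhK⟩ := hLp p hpC
      have hxeqp : x = p := by rw [hxp, hσ, zero_smul, add_zero]
      refine ⟨d + δ • v, by
        rw [hD'def]
        exact Finset.mem_coe.mpr (Finset.mem_union_left _ (Finset.mem_image_of_mem _ hdD)), ?_⟩
      set ε : ℝ := min (ρ / 2) (h / (2 * δ)) with hεdef
      have hεpos' : 0 < ε := lt_min (by positivity) (by positivity)
      refine ⟨ε, hεpos', ?_⟩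
      set θ : ℝ := ε * δ / h with hθdef
      have hθpos : 0 < θ := by positivity
      have hθhalf : θ ≤ 1 / 2 := by
        rw [hθdef, div_le_iff₀ hh]
        have h1 : ε ≤ h / (2 * δ) := min_le_right _ _
        rw [le_div_iff₀ (by positivity)] at h1
        nlinarith
      have hθ1 : (1:ℝ) - θ ≠ 0 := by intro hcon; rw [sub_eq_zero] at hcon; linarith
      set t' : ℝ := ε / (1 - θ) with ht'def
      have ht'pos : 0 < t' := by
        rw [ht'def]
        apply div_pos hεpos'
        linarith
      have ht'ρ : t' ≤ ρ := by
        rw [ht'def, div_le_iff₀ (by linarith)]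
        have h1 : ε ≤ ρ / 2 := min_le_left _ _
        nlinarith
      have hq := hd t' ht'pos ht'ρ
      have hhne : h ≠ 0 := ne_of_gt hh
      have he1 : (1 - θ) * t' = ε := by
        rw [ht'def]
        field_simp
      have he2 : θ * h = ε * δ := by
        rw [hθdef]
        field_simp
      have hid : x + ε • (d + δ • v) = (1 - θ) • (p + t' • d) + θ • (p + h • v) := by
        rw [hxeqp]
        linear_combination (norm := module) (-he1) • d + (-he2) • v
      rw [hid]
      exact hconv.combo_interior_self_mem_interior hq hhK (by linarith) (by linarith) (by ring)
    · -- above the hyperplane: direction d - δ • v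
      refine ⟨d - δ • v, by
        rw [hD'def]
        exact Finset.mem_coe.mpr (Finset.mem_union_right _ (Finset.mem_image_of_mem _ hdD)), ?_⟩
      have hσδpos : 0 < σ / δ := div_pos hσ hδpos
      refine ⟨σ / δ, hσδpos, ?_⟩
      have he : (σ / δ) * δ = σ := by field_simp
      have hid : x + (σ / δ) • (d - δ • v) = p + (σ / δ) • d := by
        rw [hxp]
        linear_combination (norm := module) (-he) • v
      rw [hid]
      refine hd _ hσδpos ?_
      have h1 : σ ≤ M := by
        have h2 := le_abs_self σ
        linarith
      have h2 : σ / δ ≤ M / δ := (div_le_div_iff_of_pos_right hδpos).mpr h1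
      have h3 : M / δ = ρ := by
        rw [hδdef]
        field_simp
      rw [h3] at h2
      exact h2

private lemma level_subspace_mem {n : ℕ} (v : Fin n → ℝ) (c : ℝ) :
    ∀ (t : ℝ) (p₁ p₂ p₃ : Fin n → ℝ), (∑ i, p₁ i * v i = c) → (∑ i, p₂ i * v i = c) →
      (∑ i, p₃ i * v i = c) → ∑ i, (t • (p₁ - p₂) + p₃) i * v i = c := by
  intro t p₁ p₂ p₃ h₁ h₂ h₃
  rw [add_comm, sc_add_smul, sc_sub, h₁, h₂, h₃]
  ring


/-- Let `K` be a convex body in `ℝ^n`, `n ≥ 3`, and let `H` be the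
affine hyperplane `{x | ⟨x, v⟩ = c}` (`v ≠ 0`). If the projection of `K` onto `H`
along the normal `v` equals `K ∩ H`, and `K` has no extreme points in `H`, then
from any finite set `D` of nonzero directions parallel to `H` that illuminates
`K ∩ H` relative to `H`, one obtains a set of at most `2|D|` nonzero directions
illuminating `K`; in particular `𝕀(K) ≤ 2·𝕀(K ∩ H)`. -/
theorem stmt16 (n : ℕ) (hn : 3 ≤ n) (K : Set (Fin n → ℝ))
    (hK : IsConvexBody K) (v : Fin n → ℝ) (hv : v ≠ 0) (c : ℝ)
    (H : Set (Fin n → ℝ)) (hH : H = {x | ∑ i, x i * v i = c})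
    (hproj :
      (fun x => x - (((∑ i, x i * v i) - c) / (∑ i, v i * v i)) • v) '' K
        = K ∩ H)
    (hext : Set.extremePoints ℝ K ∩ H = ∅)
    (D : Finset (Fin n → ℝ))
    (hD0 : ∀ d ∈ D, d ≠ 0)
    (hDpar : ∀ d ∈ D, ∑ i, d i * v i = 0)
    (hDill : ∀ p ∈ intrinsicFrontier ℝ (K ∩ H), ∃ d ∈ D, ∃ ε : ℝ, 0 < ε ∧
      p + ε • d ∈ intrinsicInterior ℝ (K ∩ H)) :
    (∃ D' : Finset (Fin n → ℝ), (∀ d ∈ D', d ≠ 0) ∧ D'.card ≤ 2 * D.card ∧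
      IlluminatesSet K ↑D') ∧
    illumNumber K ≤ 2 * relIllumNumber (K ∩ H) := by
  classical
  obtain ⟨hKconv, hKcomp, hKint⟩ := hK
  subst hH
  have hn2 : 2 ≤ n := by omega
  constructor
  · exact my_core hn2 hKconv hKcomp hKint hv c hproj hext D hDpar hDill
  · set A : Set (Fin n → ℝ) := K ∩ {x | ∑ i, x i * v i = c} with hAdef
    set Srel : Set ℕ := {m | ∃ D0 : Finset (Fin n → ℝ), D0.card = m ∧ (∀ d ∈ D0, d ≠ 0) ∧
      ∀ p ∈ intrinsicFrontier ℝ A, ∃ d ∈ D0, ∃ ε : ℝ, 0 < ε ∧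
        p + ε • d ∈ intrinsicInterior ℝ A} with hSreldef
    have hne : Srel.Nonempty := ⟨D.card, D, rfl, hD0, hDill⟩
    have hrelval : relIllumNumber A = sInf Srel := rfl
    have hInf : relIllumNumber A ∈ Srel := by
      rw [hrelval]
      exact Nat.sInf_mem hne
    obtain ⟨D₀, hD₀card, hD₀0, hD₀ill⟩ := hInf
    set D₁ : Finset (Fin n → ℝ) := D₀.filter (fun d => ∑ i, d i * v i = 0) with hD₁def
    have hD₁par : ∀ d ∈ D₁, ∑ i, d i * v i = 0 := fun d hd => (Finset.mem_filter.mp hd).2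
    -- affine span of A is inside the level hyperplane
    have hQ : ∀ z ∈ affineSpan ℝ A, ∑ i, z i * v i = c := by
      have hQ' : affineSpan ℝ A ≤
          AffineSubspace.mk {x : Fin n → ℝ | ∑ i, x i * v i = c}
            (fun t {p₁ p₂ p₃} h₁ h₂ h₃ => level_subspace_mem v c t p₁ p₂ p₃ h₁ h₂ h₃) := by
        rw [affineSpan_le]
        intro x hx
        exact hx.2
      intro z hz
      exact hQ' hz
    have hD₁ill : ∀ p ∈ intrinsicFrontier ℝ A, ∃ d ∈ D₁, ∃ ε : ℝ, 0 < ε ∧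
        p + ε • d ∈ intrinsicInterior ℝ A := by
      intro p hp
      obtain ⟨d, hd, ε, hε, hi⟩ := hD₀ill p hp
      have hpspan : p ∈ affineSpan ℝ A := by
        obtain ⟨y, _, rfl⟩ := hp
        exact y.2
      have hpdspan : p + ε • d ∈ affineSpan ℝ A := by
        obtain ⟨y, _, hy⟩ := hi
        rw [← hy]
        exact y.2
      have h1 : ∑ i, p i * v i = c := hQ p hpspan
      have h2 : ∑ i, (p + ε • d) i * v i = c := hQ _ hpdspan
      rw [sc_add_smul, h1] at h2
      have h3 : ∑ i, d i * v i = 0 := by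
        have hεne : ε ≠ 0 := ne_of_gt hε
        have := mul_eq_zero.mp (by linarith : ε * (∑ i, d i * v i) = 0)
        rcases this with h | h
        · exact absurd h hεne
        · exact h
      exact ⟨d, Finset.mem_filter.mpr ⟨hd, h3⟩, ε, hε, hi⟩
    obtain ⟨D', hD'0, hD'card, hD'ill⟩ :=
      my_core hn2 hKconv hKcomp hKint hv c hproj hext D₁ hD₁par hD₁ill
    have h2 : illumNumber K ≤ D'.card := by
      have hmem : D'.card ∈ {m | ∃ D'' : Finset (Fin n → ℝ), D''.card = m ∧
          (∀ d ∈ D'', d ≠ 0) ∧ IlluminatesSet K ↑D''} := ⟨D', rfl, hD'0, hD'ill⟩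
      exact Nat.sInf_le hmem
    have h3 : D₁.card ≤ D₀.card := Finset.card_filter_le _ _
    calc illumNumber K ≤ D'.card := h2
      _ ≤ 2 * D₁.card := hD'card
      _ ≤ 2 * D₀.card := by omega
      _ = 2 * relIllumNumber A := by rw [hD₀card]
end

section
/- Let n ≥ 2 and let B ∈ 𝒰^n be cubelike. Suppose that for some i₀ ∈ {1,…,n} the orthogonal projection of B onto the coordinate hyperplane e_{i₀}^⊥ is an (n−1)-dimensional parallelepiped (an affine image, within e_{i₀}^⊥, of an (n−1)-dimensional cube). Then 𝟙 − e_{i₀} ∈ B; equivalently, the projection of B onto e_{i₀}^⊥ equals the projection of [−1,1]^n onto e_{i₀}^⊥. -/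
open Set

section AuxLemmas

variable {n : ℕ}

private lemma flip_sq {ε : Fin n → ℝ} (hε : ∀ i, ε i = 1 ∨ ε i = -1) (i : Fin n) :
    ε i * ε i = 1 := by rcases hε i with h | h <;> rw [h] <;> norm_num

private lemma flip_extreme {P : Set (Fin n → ℝ)} {ε : Fin n → ℝ}
    (hε : ∀ i, ε i = 1 ∨ ε i = -1)
    (hP : ∀ x ∈ P, (fun i => ε i * x i) ∈ P) {y : Fin n → ℝ}
    (hy : y ∈ Set.extremePoints ℝ P) :
    (fun i => ε i * y i) ∈ Set.extremePoints ℝ P := by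
  refine ⟨hP y hy.1, ?_⟩
  intro a ha b hb hseg
  obtain ⟨t, s, ht, hs, hts, hcomb⟩ := hseg
  have hy' : y ∈ openSegment ℝ (fun i => ε i * a i) (fun i => ε i * b i) := by
    refine ⟨t, s, ht, hs, hts, ?_⟩
    funext i
    have hi : t * a i + s * b i = ε i * y i := by
      have := congrFun hcomb i
      simpa using this
    show t * (ε i * a i) + s * (ε i * b i) = y i
    linear_combination ε i * hi + y i * (flip_sq hε i)
  have h1 := hy.2 (hP a ha) (hP b hb) hy'
  funext i
  have hi1 : ε i * a i = y i := congrFun h1 i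
  show a i = ε i * y i
  linear_combination ε i * hi1 - a i * (flip_sq hε i)

end AuxLemmas

/-- If `B ∈ 𝒰^n`, `n ≥ 2`, is cubelike and its projection onto the
coordinate hyperplane `e_{i₀}^⊥` is an `(n-1)`-dimensional parallelepiped (an
injective affine image of the `(n-1)`-dimensional cube in that hyperplane), then
`𝟙 - e_{i₀} ∈ B`; equivalently, the projection of `B` onto `e_{i₀}^⊥` equals the
projection of `[-1,1]^n` onto `e_{i₀}^⊥`. -/
theorem stmt17 (n : ℕ) (hn : 2 ≤ n) (B : Set (Fin n → ℝ)) (hB : memU B)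
    (hcube : Cubelike B) (i₀ : Fin n)
    (hproj : ∃ T : (Fin n → ℝ) →ᵃ[ℝ] (Fin n → ℝ), Function.Injective T ∧
      (fun x => Function.update x i₀ 0) '' B
        = T '' {x : Fin n → ℝ | x i₀ = 0 ∧ ∀ j, |x j| ≤ 1}) :
    allOnes - stdB i₀ ∈ B ∧
      (fun x => Function.update x i₀ 0) '' B
        = (fun x => Function.update x i₀ 0) ''
            (Set.Icc (fun _ => (-1 : ℝ)) (fun _ => 1)) := by
  classical
  obtain ⟨T, hTinj, hPT⟩ := hproj
  obtain ⟨⟨hBconv, hBcomp, hBint⟩, hBunc, hBfr⟩ := hB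
  have hBclosed : IsClosed B := hBcomp.isClosed
  have hfrB : frontier B ⊆ B := hBclosed.frontier_subset
  -- negation preserves B
  have hBneg : ∀ x ∈ B, -x ∈ B := by
    intro x hx
    have := hBunc x hx (fun _ => -1) (fun i => Or.inr rfl)
    convert this using 1
    funext i; simp
  -- 0 is interior
  have hzero : (0 : Fin n → ℝ) ∈ interior B := by
    obtain ⟨z, hz⟩ := hBint
    have hnegB : (fun x : Fin n → ℝ => -x) '' B = B := by
      apply Set.Subset.antisymm
      · rintro _ ⟨x, hx, rfl⟩; exact hBneg x hx
      · intro x hx; exact ⟨-x, hBneg x hx, neg_neg x⟩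
    have h2 := (Homeomorph.neg (Fin n → ℝ)).image_interior B
    have h3 : ⇑(Homeomorph.neg (Fin n → ℝ)) = fun x : Fin n → ℝ => -x := rfl
    rw [h3, hnegB] at h2
    have hnegz : -z ∈ interior B := by
      rw [← h2]; exact ⟨z, hz, rfl⟩
    have h := hBconv.interior (a := 1/2) (b := 1/2) hz hnegz (by norm_num) (by norm_num)
      (by norm_num)
    have heq : (1/2 : ℝ) • z + (1/2 : ℝ) • (-z) = 0 := by rw [smul_neg, add_neg_cancel]
    rwa [heq] at h
  -- not interior for stdB
  have hnotint : ∀ j, stdB j ∉ interior B := by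
    intro j hint
    have hfr := hBfr j
    rw [hBclosed.frontier_eq] at hfr
    exact hfr.2 hint
  -- B sits in the unit cube
  have habs : ∀ x ∈ B, ∀ j, |x j| ≤ 1 := by
    intro x hx j
    by_contra hgt
    push_neg at hgt
    have hm : (fun k => if k = j then x j else 0) ∈ B := by
      have hflip := hBunc x hx (fun k => if k = j then 1 else -1)
        (fun k => by by_cases h : k = j <;> simp [h])
      have h := hBconv (a := 1/2) (b := 1/2) hx hflip (by norm_num) (by norm_num) (by norm_num)
      convert h using 1
      funext k
      by_cases hk : k = j <;> simp [hk] <;> ring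
    have hmc : (fun k => if k = j then |x j| else 0) ∈ B := by
      rcases le_or_gt 0 (x j) with hxy | hxy
      · rwa [abs_of_nonneg hxy]
      · have hf := hBunc _ hm (fun k => if k = j then -1 else 1)
          (fun k => by by_cases h : k = j <;> simp [h])
        rw [abs_of_neg hxy]
        convert hf using 1
        funext k
        by_cases hk : k = j <;> simp [hk]
    set c := |x j| with hc
    have hcpos : (0:ℝ) < c := lt_trans one_pos hgt
    have hint : stdB j ∈ interior B := by
      have h := hBconv.combo_interior_self_mem_interior (a := 1 - 1/c) (b := 1/c) hzero hmc
        (by rw [sub_pos, div_lt_one hcpos]; exact hgt) (by positivity) (by ring)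
      have heq : stdB j = (1 - 1/c) • (0 : Fin n → ℝ) + (1/c) • (fun k => if k = j then c else 0) := by
        funext k
        simp only [Pi.add_apply, Pi.smul_apply, smul_eq_mul, Pi.zero_apply, mul_zero, zero_add]
        by_cases hk : k = j
        · subst hk
          rw [if_pos rfl, stdB, Pi.single_eq_same]
          field_simp
        · rw [if_neg hk, stdB, Pi.single_eq_of_ne hk, mul_zero]
      rw [heq]; exact h
    exact hnotint j hint
  -- projection
  set pr : (Fin n → ℝ) → (Fin n → ℝ) := fun x => Function.update x i₀ 0 with hprdef
  have hpr_app : ∀ (x : Fin n → ℝ) (j : Fin n), pr x j = if j = i₀ then 0 else x j :=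
    fun x j => Function.update_apply x i₀ 0 j
  have hpr_combo : ∀ (t s : ℝ) (a b : Fin n → ℝ), pr (t • a + s • b) = t • pr a + s • pr b := by
    intro t s a b
    funext k
    simp only [Pi.add_apply, Pi.smul_apply, smul_eq_mul, hpr_app]
    by_cases hk : k = i₀ <;> simp [hk]
  have hpr_cont : Continuous pr := by
    have h1 : pr = fun (x : Fin n → ℝ) j => if j = i₀ then 0 else x j := by
      funext x j; exact hpr_app x j
    rw [h1]
    apply continuous_pi
    intro j
    by_cases hj : j = i₀
    · simp only [if_pos hj]; exact continuous_const
    · simp only [if_neg hj]; exact continuous_apply j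
  set P : Set (Fin n → ℝ) := pr '' B with hPdefn
  -- P basic facts
  have hPC : ∀ y ∈ P, y i₀ = 0 ∧ ∀ j, |y j| ≤ 1 := by
    rintro _ ⟨x, hx, rfl⟩
    constructor
    · rw [hpr_app]; simp
    · intro j
      rw [hpr_app]
      by_cases hj : j = i₀
      · simp [hj]
      · rw [if_neg hj]; exact habs x hx j
  have hPconv : Convex ℝ P := by
    rintro _ ⟨x1, h1, rfl⟩ _ ⟨x2, h2, rfl⟩ a b ha hb hab
    exact ⟨a • x1 + b • x2, hBconv h1 h2 ha hb hab, hpr_combo a b x1 x2⟩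
  have hPcomp : IsCompact P := hBcomp.image hpr_cont
  have hPunc : ∀ y ∈ P, ∀ ε : Fin n → ℝ, (∀ i, ε i = 1 ∨ ε i = -1) →
      (fun i => ε i * y i) ∈ P := by
    rintro _ ⟨x, hx, rfl⟩ ε hε
    refine ⟨fun i => ε i * x i, hBunc x hx ε hε, ?_⟩
    funext k
    rw [hpr_app]
    by_cases hk : k = i₀
    · simp [hk, hpr_app]
    · simp [hk, hpr_app]
  -- extreme points of P have nonzero coordinates off i₀
  have hEnz : ∀ y ∈ Set.extremePoints ℝ P, ∀ j, j ≠ i₀ → y j ≠ 0 := by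
    intro y hy j hj
    obtain ⟨x₀, hx₀B, hx₀⟩ := hy.1
    have hFclosed : IsClosed (B ∩ pr ⁻¹' {y}) :=
      hBclosed.inter (isClosed_singleton.preimage hpr_cont)
    have hFcomp : IsCompact (B ∩ pr ⁻¹' {y}) :=
      hBcomp.of_isClosed_subset hFclosed Set.inter_subset_left
    have hFne : (B ∩ pr ⁻¹' {y}).Nonempty := ⟨x₀, hx₀B, by simpa using hx₀⟩
    obtain ⟨z, hzF⟩ := hFcomp.extremePoints_nonempty hFne
    have hyz : pr z = y := by have := hzF.1.2; simpa using this
    have hzB : z ∈ Set.extremePoints ℝ B := by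
      refine ⟨hzF.1.1, ?_⟩
      intro a ha b hb hseg
      obtain ⟨t, s, ht, hs, hts, hcomb⟩ := hseg
      have hyseg : y ∈ openSegment ℝ (pr a) (pr b) :=
        ⟨t, s, ht, hs, hts, by rw [← hpr_combo, hcomb, hyz]⟩
      have hab := hy.2 (⟨a, ha, rfl⟩ : pr a ∈ P) (⟨b, hb, rfl⟩ : pr b ∈ P) hyseg
      have haF : a ∈ B ∩ pr ⁻¹' {y} := ⟨ha, by simp [hab]⟩
      have hbF : b ∈ B ∩ pr ⁻¹' {y} := ⟨hb, by simp [hy.2 (⟨b, hb, rfl⟩ : pr b ∈ P) (⟨a, ha, rfl⟩ : pr a ∈ P) (by rw [openSegment_symm]; exact hyseg)]⟩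
      exact hzF.2 haF hbF ⟨t, s, ht, hs, hts, hcomb⟩
    have hz0 : z j ≠ 0 := hcube z hzB j
    have hyj : y j = z j := by
      rw [← hyz, hpr_app, if_neg hj]
    rw [hyj]; exact hz0
  -- vertices set V and cube C
  set V : Set (Fin n → ℝ) := {x | x i₀ = 0 ∧ ∀ j, j ≠ i₀ → (x j = 1 ∨ x j = -1)} with hVdef
  have hVpi : V = Set.pi Set.univ (fun i => if i = i₀ then {(0:ℝ)} else {-1, 1}) := by
    ext x
    simp only [hVdef, Set.mem_setOf_eq, Set.mem_pi, Set.mem_univ, forall_true_left]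
    constructor
    · rintro ⟨h0, h⟩ i
      by_cases hi : i = i₀
      · subst hi; simp [h0]
      · rw [if_neg hi]
        rcases h i hi with h | h <;> simp [h]
    · intro h
      constructor
      · have := h i₀; simpa using this
      · intro j hj
        have := h j
        rw [if_neg hj] at this
        simp only [Set.mem_insert_iff, Set.mem_singleton_iff] at this
        tauto
  have hCpi : {x : Fin n → ℝ | x i₀ = 0 ∧ ∀ j, |x j| ≤ 1}
      = Set.pi Set.univ (fun i => if i = i₀ then {(0:ℝ)} else Set.Icc (-1) 1) := by
    ext x
    simp only [Set.mem_setOf_eq, Set.mem_pi, Set.mem_univ, forall_true_left]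
    constructor
    · rintro ⟨h0, h⟩ i
      by_cases hi : i = i₀
      · subst hi; simp [h0]
      · rw [if_neg hi]
        exact abs_le.mp (h i)
    · intro h
      have h0 : x i₀ = 0 := by have := h i₀; simpa using this
      refine ⟨h0, fun j => ?_⟩
      by_cases hj : j = i₀
      · rw [hj, h0]; norm_num
      · have := h j
        rw [if_neg hj] at this
        exact abs_le.mpr this
  have hfam : (fun i : Fin n => convexHull ℝ (if i = i₀ then ({0} : Set ℝ) else {-1, 1}))
      = fun i : Fin n => if i = i₀ then ({0} : Set ℝ) else Set.Icc (-1) 1 := by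
    funext i
    by_cases hi : i = i₀
    · rw [if_pos hi, if_pos hi, convexHull_singleton]
    · rw [if_neg hi, if_neg hi, convexHull_pair, segment_eq_Icc (by norm_num : (-1:ℝ) ≤ 1)]
  have hCV : {x : Fin n → ℝ | x i₀ = 0 ∧ ∀ j, |x j| ≤ 1} = convexHull ℝ V := by
    rw [hVpi, convexHull_pi, hfam, ← hCpi]
  -- extreme points of P are images of vertices
  have hEV : Set.extremePoints ℝ P ⊆ T '' V := by
    intro y hy
    have hyP := hy.1
    rw [hPT] at hyP
    obtain ⟨x, hxC, hTx⟩ := hyP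
    refine ⟨x, ⟨hxC.1, ?_⟩, hTx⟩
    intro j hj
    by_contra hxj
    push_neg at hxj
    have hlt : |x j| < 1 := by
      refine lt_of_le_of_ne (hxC.2 j) ?_
      intro h
      rcases (abs_eq (by norm_num : (0:ℝ) ≤ 1)).mp h with h | h
      · exact hxj.1 h
      · exact hxj.2 h
    set δ : ℝ := 1 - |x j| with hδ
    have hδpos : 0 < δ := by simp only [hδ]; linarith
    set a : Fin n → ℝ := fun k => if k = j then x j + δ else x k with ha
    set b : Fin n → ℝ := fun k => if k = j then x j - δ else x k with hb
    have haC : a ∈ {x : Fin n → ℝ | x i₀ = 0 ∧ ∀ j, |x j| ≤ 1} := by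
      constructor
      · simp only [ha]
        rw [if_neg (fun h => hj h.symm)]
        exact hxC.1
      · intro k
        simp only [ha]
        by_cases hk : k = j
        · rw [if_pos hk]
          calc |x j + δ| ≤ |x j| + |δ| := abs_add_le _ _
            _ = |x j| + δ := by rw [abs_of_pos hδpos]
            _ = 1 := by simp only [hδ]; ring
        · rw [if_neg hk]; exact hxC.2 k
    have hbC : b ∈ {x : Fin n → ℝ | x i₀ = 0 ∧ ∀ j, |x j| ≤ 1} := by
      constructor
      · simp only [hb]
        rw [if_neg (fun h => hj h.symm)]
        exact hxC.1
      · intro k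
        simp only [hb]
        by_cases hk : k = j
        · rw [if_pos hk, sub_eq_add_neg]
          calc |x j + -δ| ≤ |x j| + |-δ| := abs_add_le _ _
            _ = |x j| + δ := by rw [abs_neg, abs_of_pos hδpos]
            _ = 1 := by simp only [hδ]; ring
        · rw [if_neg hk]; exact hxC.2 k
    have hxab : x = (1/2 : ℝ) • a + (1/2 : ℝ) • b := by
      funext k
      simp only [Pi.add_apply, Pi.smul_apply, smul_eq_mul, ha, hb]
      by_cases hk : k = j
      · rw [if_pos hk, if_pos hk, hk]; ring
      · rw [if_neg hk, if_neg hk]; ring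
    have hseg : y ∈ openSegment ℝ (T a) (T b) := by
      refine ⟨1/2, 1/2, by norm_num, by norm_num, by norm_num, ?_⟩
      rw [← Convex.combo_affine_apply (by norm_num), ← hxab, hTx]
    have hTaP : T a ∈ P := by rw [hPT]; exact ⟨a, haC, rfl⟩
    have hTbP : T b ∈ P := by rw [hPT]; exact ⟨b, hbC, rfl⟩
    have hab := hy.2 hTaP hTbP hseg
    have hax : a = x := hTinj (hab.trans hTx.symm)
    have := congrFun hax j
    simp only [ha, if_pos rfl] at this
    linarith
  -- an extreme point w of P
  have hPne : P.Nonempty := by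
    obtain ⟨z, hz⟩ := hBint
    exact ⟨pr z, z, interior_subset hz, rfl⟩
  obtain ⟨w, hw⟩ := hPcomp.extremePoints_nonempty hPne
  have hw0 : w i₀ = 0 := (hPC w hw.1).1
  have hwnz : ∀ j, j ≠ i₀ → w j ≠ 0 := fun j hj => hEnz w hw j hj
  -- vertex parametrizations
  set vmap : ({j : Fin n // j ≠ i₀} → Bool) → (Fin n → ℝ) :=
    fun f k => if h : k = i₀ then 0 else if f ⟨k, h⟩ then 1 else -1 with hvmap
  set wmap : ({j : Fin n // j ≠ i₀} → Bool) → (Fin n → ℝ) :=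
    fun f k => if h : k = i₀ then 0 else if f ⟨k, h⟩ then w k else -(w k) with hwmap
  have hvinj : Function.Injective vmap := by
    intro f g hfg
    funext j
    have hj := congrFun hfg j.1
    simp only [hvmap] at hj
    rw [dif_neg j.2, dif_neg j.2] at hj
    by_cases hf : f ⟨j.1, j.2⟩ <;> by_cases hg : g ⟨j.1, j.2⟩ <;>
      rw [Subtype.eta] at hf hg <;>
      simp only [hf, hg, if_pos, if_neg, Subtype.eta] at hj ⊢ <;> try norm_num at hj
  have hwinj : Function.Injective wmap := by
    intro f g hfg
    funext j
    have hj := congrFun hfg j.1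
    simp only [hwmap] at hj
    rw [dif_neg j.2, dif_neg j.2] at hj
    by_cases hf : f ⟨j.1, j.2⟩ <;> by_cases hg : g ⟨j.1, j.2⟩ <;>
      rw [Subtype.eta] at hf hg <;>
      simp only [hf, hg, if_true, Bool.false_eq_true, if_false, Subtype.eta] at hj ⊢
    · have : w j.1 = 0 := by linarith [hj]
      exact absurd this (hwnz j.1 j.2)
    · have : w j.1 = 0 := by linarith [hj]
      exact absurd this (hwnz j.1 j.2)
  have hVim : vmap '' Set.univ = V := by
    apply Set.Subset.antisymm
    · rintro _ ⟨f, -, rfl⟩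
      refine ⟨by simp [hvmap], fun j hj => ?_⟩
      simp only [hvmap]
      rw [dif_neg hj]
      by_cases hf : f ⟨j, hj⟩ <;> simp [hf]
    · intro y hyV
      refine ⟨fun j => decide (y j.1 = 1), Set.mem_univ _, ?_⟩
      funext k
      simp only [hvmap]
      by_cases hk : k = i₀
      · rw [dif_pos hk, hk, hyV.1]
      · rw [dif_neg hk]
        rcases hyV.2 k hk with h1 | h1
        · simp only [h1, decide_eq_true_eq]
          norm_num
        · simp only [h1, decide_eq_true_eq]
          norm_num
  have hwim : wmap '' Set.univ ⊆ Set.extremePoints ℝ P := by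
    rintro _ ⟨f, -, rfl⟩
    set ε : Fin n → ℝ := fun i => if h : i = i₀ then 1 else (if f ⟨i, h⟩ then 1 else -1) with hε
    have hεs : ∀ i, ε i = 1 ∨ ε i = -1 := by
      intro i
      simp only [hε]
      by_cases hi : i = i₀
      · rw [dif_pos hi]; exact Or.inl rfl
      · rw [dif_neg hi]
        by_cases hf : f ⟨i, hi⟩ <;> simp [hf]
    have heq : wmap f = fun i => ε i * w i := by
      funext k
      simp only [hwmap, hε]
      by_cases hk : k = i₀
      · rw [dif_pos hk, dif_pos hk, one_mul, hk, hw0]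
      · rw [dif_neg hk, dif_neg hk]
        by_cases hf : f ⟨k, hk⟩ <;> simp [hf]
    rw [heq]
    exact flip_extreme hεs (fun x hx => hPunc x hx ε hεs) hw
  -- counting
  have hTVfin : (T '' V).Finite := by
    rw [← hVim, ← Set.image_comp]
    exact Set.finite_univ.image _
  have hEfin : (Set.extremePoints ℝ P).Finite := hTVfin.subset hEV
  have hcard1 : (T '' V).ncard = Nat.card ({j : Fin n // j ≠ i₀} → Bool) := by
    rw [← hVim, ← Set.image_comp, Set.ncard_image_of_injective _ (hTinj.comp hvinj),
      Set.ncard_univ]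
  have hcard2 : (wmap '' Set.univ).ncard = Nat.card ({j : Fin n // j ≠ i₀} → Bool) := by
    rw [Set.ncard_image_of_injective _ hwinj, Set.ncard_univ]
  have hn1 : (wmap '' Set.univ).ncard ≤ (Set.extremePoints ℝ P).ncard :=
    Set.ncard_le_ncard hwim hEfin
  have hn2 : (Set.extremePoints ℝ P).ncard ≤ (T '' V).ncard :=
    Set.ncard_le_ncard hEV hTVfin
  have hEw : wmap '' Set.univ = Set.extremePoints ℝ P := by
    apply Set.eq_of_subset_of_ncard_le hwim _ hEfin
    omega
  have hETV : Set.extremePoints ℝ P = T '' V := by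
    apply Set.eq_of_subset_of_ncard_le hEV _ hTVfin
    omega
  -- P is the convex hull of its extreme points
  have hPhull : P = convexHull ℝ (Set.extremePoints ℝ P) := by
    rw [hETV, ← AffineMap.image_convexHull, ← hCV]
    exact hPT
  -- each |w j| = 1 off i₀
  have hstdP : ∀ j, j ≠ i₀ → stdB j ∈ P := by
    intro j hj
    refine ⟨stdB j, hfrB (hBfr j), ?_⟩
    funext k
    rw [hpr_app]
    by_cases hk : k = i₀
    · rw [if_pos hk, hk, stdB, Pi.single_eq_of_ne (fun h => hj h.symm) 1]
    · rw [if_neg hk]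
  have habsw : ∀ j, j ≠ i₀ → |w j| = 1 := by
    intro j hj
    have hle : |w j| ≤ 1 := (hPC w hw.1).2 j
    have hCjconv : Convex ℝ {x : Fin n → ℝ | |x j| ≤ |w j|} := by
      intro a ha b hb t s ht hs hts
      simp only [Set.mem_setOf_eq] at ha hb ⊢
      calc |(t • a + s • b) j| = |t * a j + s * b j| := by simp
        _ ≤ |t * a j| + |s * b j| := abs_add_le _ _
        _ = t * |a j| + s * |b j| := by rw [abs_mul, abs_mul, abs_of_nonneg ht, abs_of_nonneg hs]
        _ ≤ t * |w j| + s * |w j| := add_le_add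
            (mul_le_mul_of_nonneg_left ha ht) (mul_le_mul_of_nonneg_left hb hs)
        _ = |w j| := by rw [← add_mul, hts, one_mul]
    have hEsub : Set.extremePoints ℝ P ⊆ {x : Fin n → ℝ | |x j| ≤ |w j|} := by
      intro y hy
      rw [← hEw] at hy
      obtain ⟨f, -, rfl⟩ := hy
      simp only [Set.mem_setOf_eq, hwmap]
      rw [dif_neg hj]
      by_cases hf : f ⟨j, hj⟩ <;> simp [hf]
    have hhull : convexHull ℝ (Set.extremePoints ℝ P) ⊆ {x : Fin n → ℝ | |x j| ≤ |w j|} :=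
      convexHull_min hEsub hCjconv
    have hstd : stdB j ∈ {x : Fin n → ℝ | |x j| ≤ |w j|} := by
      rw [← hPhull] at hhull
      exact hhull (hstdP j hj)
    have hge : 1 ≤ |w j| := by
      have := hstd
      simp only [Set.mem_setOf_eq, stdB, Pi.single_eq_same] at this
      simpa using this
    linarith
  -- the top vertex v lies in P
  have hwsigns : ∀ k, k ≠ i₀ → (w k = 1 ∨ w k = -1) :=
    fun k hk => (abs_eq (by norm_num : (0:ℝ) ≤ 1)).mp (habsw k hk)
  set v : Fin n → ℝ := fun k => if k = i₀ then 0 else 1 with hv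
  have hvP : v ∈ P := by
    set ε : Fin n → ℝ := fun k => if k = i₀ then 1 else w k with hε
    have hεs : ∀ i, ε i = 1 ∨ ε i = -1 := by
      intro i
      simp only [hε]
      by_cases hi : i = i₀
      · rw [if_pos hi]; exact Or.inl rfl
      · rw [if_neg hi]; exact hwsigns i hi
    have heq : (fun i => ε i * w i) = v := by
      funext k
      simp only [hε, hv]
      by_cases hk : k = i₀
      · rw [if_pos hk, if_pos hk, one_mul, hk, hw0]
      · rw [if_neg hk, if_neg hk]
        rcases hwsigns k hk with h | h <;> rw [h] <;> norm_num
    have := hPunc w hw.1 ε hεs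
    rwa [heq] at this
  -- Conclusion 1
  obtain ⟨x, hxB, hxv⟩ := hvP
  have hx1 : ∀ k, k ≠ i₀ → x k = 1 := by
    intro k hk
    have := congrFun hxv k
    rw [hpr_app, if_neg hk] at this
    rw [this]
    simp only [hv]
    rw [if_neg hk]
  have hx'B : (fun i => (if i = i₀ then (-1:ℝ) else 1) * x i) ∈ B :=
    hBunc x hxB _ (fun i => by by_cases h : i = i₀ <;> simp [h])
  have hconc1 : allOnes - stdB i₀ ∈ B := by
    have h := hBconv (a := 1/2) (b := 1/2) hxB hx'B (by norm_num) (by norm_num) (by norm_num)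
    have heq : allOnes - stdB i₀
        = (1/2 : ℝ) • x + (1/2 : ℝ) • (fun i => (if i = i₀ then (-1:ℝ) else 1) * x i) := by
      funext k
      simp only [Pi.sub_apply, Pi.add_apply, Pi.smul_apply, smul_eq_mul, allOnes, stdB]
      by_cases hk : k = i₀
      · rw [hk, Pi.single_eq_same, if_pos rfl]; ring
      · rw [Pi.single_eq_of_ne hk, if_neg hk, hx1 k hk]; ring
    rw [heq]; exact h
  -- Conclusion 2
  have hPeqC : P = {x : Fin n → ℝ | x i₀ = 0 ∧ ∀ j, |x j| ≤ 1} := by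
    apply Set.Subset.antisymm
    · intro y hy; exact hPC y hy
    · rw [hCV]
      apply convexHull_min _ hPconv
      intro u huV
      set ε : Fin n → ℝ := fun k => if k = i₀ then 1 else u k with hε
      have hεs : ∀ i, ε i = 1 ∨ ε i = -1 := by
        intro i
        simp only [hε]
        by_cases hi : i = i₀
        · rw [if_pos hi]; exact Or.inl rfl
        · rw [if_neg hi]; exact huV.2 i hi
      have heq : (fun i => ε i * v i) = u := by
        funext k
        simp only [hε, hv]
        by_cases hk : k = i₀
        · rw [if_pos hk, if_pos hk, mul_zero, hk, huV.1]
        · rw [if_neg hk, if_neg hk, mul_one]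
      have hvP' : v ∈ P := ⟨x, hxB, hxv⟩
      have := hPunc v hvP' ε hεs
      rwa [heq] at this
  have hIccC : pr '' (Set.Icc (fun _ => (-1:ℝ)) (fun _ => 1))
      = {x : Fin n → ℝ | x i₀ = 0 ∧ ∀ j, |x j| ≤ 1} := by
    apply Set.Subset.antisymm
    · rintro _ ⟨x, hx, rfl⟩
      rw [Set.mem_Icc] at hx
      constructor
      · rw [hpr_app, if_pos rfl]
      · intro j
        rw [hpr_app]
        by_cases hj : j = i₀
        · rw [if_pos hj]; norm_num
        · rw [if_neg hj]
          exact abs_le.mpr ⟨hx.1 j, hx.2 j⟩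
    · intro y hy
      refine ⟨y, ?_, ?_⟩
      · rw [Set.mem_Icc]
        exact ⟨fun j => (abs_le.mp (hy.2 j)).1, fun j => (abs_le.mp (hy.2 j)).2⟩
      · funext k
        rw [hpr_app]
        by_cases hk : k = i₀
        · rw [if_pos hk, hk, hy.1]
        · rw [if_neg hk]
  exact ⟨hconc1, hPeqC.trans hIccC.symm⟩
end
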